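/- Let (M, μ) be a finite measure space and F: M → M a bi-measurable bijection implemented as in the intertwining hypothesis (there is a unitary U on L²(M,μ) with U·M_f = M_{f∘F⁻¹}·U for all bounded measurable f). Then μ and the pushforward measure μ_F(A) = μ(F(A)) are mutually absolutely continuous (equivalent measures). -/

import Mathlib

open MeasureTheory

/-- Under the intertwining hypothesis, μ and the pushforward measure
μ_F(A) = μ(F(A)) are mutually absolutely continuous (equivalent measures). -/
theorem pushforward_equivalent {M : Type*} [MeasurableSpace M]
    (μ : Measure M) [IsFiniteMeasure μ] (F : M ≃ᵐ M)
    (U : Lp ℂ 2 μ ≃ₗᵢ[ℂ] Lp ℂ 2 μ)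
    (hU : ∀ f : M → ℂ, Measurable f → (∃ C, ∀ x, ‖f x‖ ≤ C) →
      ∀ ξ η : Lp ℂ 2 μ, (∀ᵐ m ∂μ, (η : M → ℂ) m = f m * (ξ : M → ℂ) m) →
        ∀ᵐ m ∂μ, (U η : M → ℂ) m = f (F.symm m) * (U ξ : M → ℂ) m) :
    μ.map F.symm ≪ μ ∧ μ ≪ μ.map F.symm := by
  have hone : MemLp (fun _ : M => (1 : ℂ)) 2 μ := memLp_const 1
  set oneLp : Lp ℂ 2 μ := hone.toLp _ with honedef
  have hone_ae : (oneLp : M → ℂ) =ᵐ[μ] fun _ => (1 : ℂ) := hone.coeFn_toLp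
  constructor
  · -- μ.map F.symm ≪ μ
    refine Measure.AbsolutelyContinuous.mk (fun A hA hA0 => ?_)
    rw [MeasurableEquiv.map_apply]
    have hf : Measurable (A.indicator fun _ => (1 : ℂ)) :=
      measurable_const.indicator hA
    have hbd : ∃ C, ∀ x, ‖A.indicator (fun _ => (1 : ℂ)) x‖ ≤ C := by
      refine ⟨1, fun x => ?_⟩
      by_cases hx : x ∈ A <;> simp [Set.indicator, hx]
    have hAae : ∀ᵐ m ∂μ, A.indicator (fun _ => (1 : ℂ)) m = 0 := by
      have : ∀ᵐ m ∂μ, m ∉ A := (ae_iff.2 (by simpa using hA0))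
      filter_upwards [this] with m hm
      simp [Set.indicator_of_notMem hm]
    have hyp : ∀ᵐ m ∂μ, ((0 : Lp ℂ 2 μ) : M → ℂ) m
        = A.indicator (fun _ => (1 : ℂ)) m * ((U.symm oneLp : Lp ℂ 2 μ) : M → ℂ) m := by
      filter_upwards [hAae, Lp.coeFn_zero ℂ 2 μ] with m h1 h2
      rw [h2, Pi.zero_apply, h1, zero_mul]
    have key := hU _ hf hbd (U.symm oneLp) 0 hyp
    rw [U.apply_symm_apply, map_zero] at key
    have key2 : ∀ᵐ m ∂μ, A.indicator (fun _ => (1 : ℂ)) (F.symm m) = 0 := by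
      filter_upwards [key, hone_ae, Lp.coeFn_zero ℂ 2 μ] with m h1 h2 h3
      rw [h3, h2] at h1
      simpa using h1.symm
    have : μ {m | ¬ A.indicator (fun _ => (1 : ℂ)) (F.symm m) = 0} = 0 := ae_iff.1 key2
    refine measure_mono_null (fun m hm => ?_) this
    simp only [Set.mem_setOf_eq, Set.mem_preimage] at hm ⊢
    simp [Set.indicator_of_mem hm]
  · -- μ ≪ μ.map F.symm
    refine Measure.AbsolutelyContinuous.mk (fun A hA hA0 => ?_)
    rw [MeasurableEquiv.map_apply] at hA0
    have hf : Measurable (A.indicator fun _ => (1 : ℂ)) :=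
      measurable_const.indicator hA
    have hbd : ∃ C, ∀ x, ‖A.indicator (fun _ => (1 : ℂ)) x‖ ≤ C := by
      refine ⟨1, fun x => ?_⟩
      by_cases hx : x ∈ A <;> simp [Set.indicator, hx]
    have hmem : MemLp (A.indicator fun _ => (1 : ℂ)) 2 μ :=
      memLp_indicator_const 2 hA 1 (Or.inr (measure_ne_top μ A))
    set η : Lp ℂ 2 μ := hmem.toLp _ with hηdef
    have hη_ae : (η : M → ℂ) =ᵐ[μ] A.indicator (fun _ => (1 : ℂ)) := hmem.coeFn_toLp
    have hyp : ∀ᵐ m ∂μ, (η : M → ℂ) m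
        = A.indicator (fun _ => (1 : ℂ)) m * ((oneLp : Lp ℂ 2 μ) : M → ℂ) m := by
      filter_upwards [hη_ae, hone_ae] with m h1 h2
      simp [h1, h2, Pi.zero_apply]
    have key := hU _ hf hbd oneLp η hyp
    -- F.symm m ∉ A a.e.
    have hBae : ∀ᵐ m ∂μ, F.symm m ∉ A := ae_iff.2 (by simp only [not_not]; exact hA0)
    have hUη : ∀ᵐ m ∂μ, ((U η : Lp ℂ 2 μ) : M → ℂ) m = 0 := by
      filter_upwards [key, hBae] with m h1 h2
      simp [h1, Set.indicator_of_notMem h2]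
    have hUη0 : U η = 0 := by
      have : ((U η : Lp ℂ 2 μ) : M → ℂ) =ᵐ[μ] ((0 : Lp ℂ 2 μ) : M → ℂ) := by
        filter_upwards [hUη, Lp.coeFn_zero ℂ 2 μ] with m h1 h2
        rw [h1, h2, Pi.zero_apply]
      exact Lp.ext_iff.2 this
    have hη0 : η = 0 := by
      have := congrArg U.symm hUη0
      simpa using this
    have hind0 : ∀ᵐ m ∂μ, A.indicator (fun _ => (1 : ℂ)) m = 0 := by
      filter_upwards [hη_ae, Lp.coeFn_zero ℂ 2 μ, (hη0 ▸ hη_ae : ((0 : Lp ℂ 2 μ) : M → ℂ) =ᵐ[μ] _)] with m h1 h2 h3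
      rw [← h3, h2, Pi.zero_apply]
    have : μ {m | ¬ A.indicator (fun _ => (1 : ℂ)) m = 0} = 0 := ae_iff.1 hind0
    refine measure_mono_null (fun m hm => ?_) this
    simp only [Set.mem_setOf_eq] at hm ⊢
    simp [Set.indicator_of_mem hm]
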